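/- For a finitely presented A-module N and any indexing set I, the natural map (∏_{i∈I} A) ⊗_A N → ∏_{i∈I} N is an isomorphism. -/

import Mathlib

universe u

open TensorProduct

/-- The natural map `(∏_{i ∈ ι} A) ⊗[A] N → ∏_{i ∈ ι} N` sending `(aᵢ) ⊗ n` to `(aᵢ • n)`. -/
noncomputable def piTensorHom (A : Type u) [CommRing A] (ι : Type u) (N : Type u)
    [AddCommGroup N] [Module A N] : ((ι → A) ⊗[A] N) →ₗ[A] (ι → N) :=
  TensorProduct.lift (LinearMap.mk₂ A (fun a n i => a i • n)
    (fun a a' n => by funext i; simp [add_smul])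
    (fun c a n => by funext i; simp [mul_smul])
    (fun a n n' => by funext i; simp [smul_add])
    (fun c a n => by funext i; exact smul_comm _ _ _))

@[simp] lemma piTensorHom_tmul (A : Type u) [CommRing A] (ι : Type u) (N : Type u)
    [AddCommGroup N] [Module A N] (a : ι → A) (n : N) :
    piTensorHom A ι N (a ⊗ₜ n) = fun i => a i • n := rfl

/-- Naturality of `piTensorHom`. -/
lemma piTensorHom_naturality (A : Type u) [CommRing A] (ι : Type u) {M N : Type u}
    [AddCommGroup M] [Module A M] [AddCommGroup N] [Module A N] (g : M →ₗ[A] N)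
    (x : (ι → A) ⊗[A] M) :
    g ∘ (piTensorHom A ι M x) = piTensorHom A ι N (g.lTensor (ι → A) x) := by
  induction x with
  | zero => simp
  | add x y hx hy =>
      simp only [map_add, Pi.add_def] at hx hy ⊢
      funext i
      simp [← congrFun hx i, ← congrFun hy i]
  | tmul a m =>
      funext i
      simp

/-- `piTensorHom` is bijective for finite free modules. -/
lemma piTensorHom_bijective_free (A : Type u) [CommRing A] (ι : Type u) (n : ℕ) :
    Function.Bijective (piTensorHom A ι (Fin n → A)) := by
  classical
  let inv : (ι → Fin n → A) →ₗ[A] ((ι → A) ⊗[A] (Fin n → A)) :=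
    { toFun := fun v => ∑ j : Fin n, (fun i => v i j) ⊗ₜ[A] Pi.single j (1 : A)
      map_add' := fun v w => by
        rw [← Finset.sum_add_distrib]
        refine Finset.sum_congr rfl fun j _ => ?_
        rw [← TensorProduct.add_tmul]; rfl
      map_smul' := fun c v => by
        show ∑ j : Fin n, (fun i => (c • v) i j) ⊗ₜ[A] Pi.single j (1 : A)
          = c • ∑ j : Fin n, (fun i => v i j) ⊗ₜ[A] Pi.single j (1 : A)
        rw [Finset.smul_sum]
        refine Finset.sum_congr rfl fun j _ => ?_
        rw [TensorProduct.smul_tmul']; rfl }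
  have hleft : ∀ x, inv (piTensorHom A ι (Fin n → A) x) = x := by
    intro x
    induction x with
    | zero => simp only [map_zero]
    | add x y hx hy => simp only [map_add, hx, hy]
    | tmul a v =>
      show ∑ j : Fin n, (fun i => (a i • v) j) ⊗ₜ[A] Pi.single j (1 : A) = a ⊗ₜ[A] v
      have h : ∀ j : Fin n, ((fun i => (a i • v) j) ⊗ₜ[A] (Pi.single j (1 : A)) :
          (ι → A) ⊗[A] (Fin n → A)) = a ⊗ₜ[A] Pi.single j (v j) := by
        intro j
        have h1 : (fun i => (a i • v) j) = v j • a := by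
          funext i; simp [mul_comm]
        rw [h1, TensorProduct.smul_tmul, ← Pi.single_smul, smul_eq_mul, mul_one]
      rw [Finset.sum_congr rfl fun j _ => h j, ← TensorProduct.tmul_sum,
        Finset.univ_sum_single v]
  have hright : ∀ v, piTensorHom A ι (Fin n → A) (inv v) = v := by
    intro v
    funext i
    show (piTensorHom A ι (Fin n → A)
      (∑ j : Fin n, (fun i => v i j) ⊗ₜ[A] Pi.single j (1 : A))) i = v i
    rw [map_sum]
    simp only [Finset.sum_apply, piTensorHom_tmul]
    simp_rw [← Pi.single_smul, smul_eq_mul, mul_one]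
    exact Finset.univ_sum_single (v i)
  exact ⟨Function.LeftInverse.injective hleft, Function.RightInverse.surjective hright⟩

/-- For a finitely presented `A`-module `N` and any indexing set `ι`, the natural map
`(∏_{i ∈ ι} A) ⊗_A N → ∏_{i ∈ ι} N` is an isomorphism. -/
theorem piTensorHom_bijective_of_finitePresentation (A : Type u) [CommRing A] (ι : Type u)
    (N : Type u) [AddCommGroup N] [Module A N] [Module.FinitePresentation A N] :
    Function.Bijective (piTensorHom A ι N) := by
  classical
  -- choose a finite presentation
  obtain ⟨n, f, hf⟩ := Module.Finite.exists_fin' A N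
  have hker : (LinearMap.ker f).FG := Module.FinitePresentation.fg_ker f hf
  obtain ⟨m, s, hs⟩ := Submodule.fg_iff_exists_fin_generating_family.mp hker
  -- g : A^m → A^n with range g = ker f
  let g : (Fin m → A) →ₗ[A] (Fin n → A) := Fintype.linearCombination A s
  have hrange : LinearMap.range g = LinearMap.ker f := by
    rw [Fintype.range_linearCombination, hs]
  have hfg : f ∘ₗ g = 0 := by
    apply LinearMap.ext
    intro w
    have : g w ∈ LinearMap.ker f := hrange ▸ LinearMap.mem_range_self g w
    simpa using this
  have hbn := piTensorHom_bijective_free A ι n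
  have hbm := piTensorHom_bijective_free A ι m
  constructor
  · -- injectivity
    rw [injective_iff_map_eq_zero]
    intro z hzero
    obtain ⟨y', rfl⟩ := LinearMap.lTensor_surjective (ι → A) hf z
    have h1 : f ∘ piTensorHom A ι (Fin n → A) y' = 0 := by
      rw [piTensorHom_naturality, hzero]
    have h2 : ∀ i, piTensorHom A ι (Fin n → A) y' i ∈ LinearMap.range g := by
      intro i
      rw [hrange, LinearMap.mem_ker]
      exact congrFun h1 i
    choose w hw using h2
    obtain ⟨z', hz'⟩ := hbm.2 w
    have h3 : piTensorHom A ι (Fin n → A) ((g.lTensor (ι → A)) z')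
        = piTensorHom A ι (Fin n → A) y' := by
      rw [← piTensorHom_naturality, hz']
      funext i
      exact hw i
    have h4 : (g.lTensor (ι → A)) z' = y' := hbn.1 h3
    rw [← h4, ← LinearMap.comp_apply, ← LinearMap.lTensor_comp, hfg]
    simp
  · -- surjectivity
    intro v
    choose w hw using fun i => hf (v i)
    obtain ⟨x, hx⟩ := hbn.2 w
    refine ⟨(f.lTensor (ι → A)) x, ?_⟩
    rw [← piTensorHom_naturality, hx]
    funext i
    exact hw i
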